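/- Fix d ≥ 1, partitions λ and μ, and integers n_1 ≥ … ≥ n_d ≥ |μ| + μ_1. For each integer l ≥ 0, let c_l denote the number of chains of partitions λ = ν^{(0)} ≤ ν^{(1)} ≤ … ≤ ν^{(d)} = μ[n_1+l, …, n_d+l] in which each skew diagram ν^{(i)}/ν^{(i−1)} contains at most one box in each column. Then c_l takes the same value for all l with n_d + l ≥ λ_1 + |λ|. -/

import Mathlib

/-- A partition, encoded as the weakly decreasing, eventually zero sequence of its parts
(0-indexed: `μ 0` is the first part `μ_1`). -/
def IsPartition (μ : ℕ → ℕ) : Prop := Antitone μ ∧ ∃ N, ∀ n ≥ N, μ n = 0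

/-- The size `|μ|` of a partition: the sum of its parts. -/
noncomputable def psize (μ : ℕ → ℕ) : ℕ := ∑ᶠ i, μ i

/-- The `r`-padded partition `μ[n_1,…,n_r] = (n_1 − |μ|, …, n_r − |μ|, μ_1, μ_2, …)`. -/
noncomputable def pad (r : ℕ) (n : Fin r → ℕ) (lam : ℕ → ℕ) : ℕ → ℕ :=
  fun i => if h : i < r then n ⟨i, h⟩ - psize lam else lam (i - r)

/-- The skew diagram `μ/ν` (boxes `(i,j)` with `ν i ≤ j < μ i`, rows and columns 0-indexed)
has at most one box in each column. -/
def AtMostOnePerColumn (ν μ : ℕ → ℕ) : Prop :=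
  ∀ j i i', ν i ≤ j → j < μ i → ν i' ≤ j → j < μ i' → i = i'

/-- The number of chains of partitions `lam = c 0 ≤ c 1 ≤ … ≤ c d = μ` in which each
successive skew diagram has at most one box in each column (by Pieri's rule, the
multiplicity of `S^μ` in the free FI_d-module generated by `S^lam`). -/
noncomputable def chainCount (d : ℕ) (lam μ : ℕ → ℕ) : ℕ :=
  Nat.card {c : Fin (d + 1) → ℕ → ℕ //
    c 0 = lam ∧ c (Fin.last d) = μ ∧ (∀ i, IsPartition (c i)) ∧
    ∀ i : Fin d, (∀ j, c i.castSucc j ≤ c i.succ j) ∧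
      AtMostOnePerColumn (c i.castSucc) (c i.succ)}

lemma strip_step {ν μ' : ℕ → ℕ} (hν : Antitone ν) (hμ : Antitone μ')
    (h : AtMostOnePerColumn ν μ') (i : ℕ) : μ' (i + 1) ≤ ν i := by
  by_contra hcon
  push_neg at hcon
  rcases lt_or_ge (ν i) (μ' i) with h1 | h1
  · have := h (ν i) i (i + 1) le_rfl h1 (hν (by omega : i ≤ i + 1)) hcon
    omega
  · have := hμ (by omega : i ≤ i + 1)
    omega

lemma strip_chain {ν μ' : ℕ → ℕ} (hν : Antitone ν) (hμ : Antitone μ')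
    (h : AtMostOnePerColumn ν μ') {i i' : ℕ} (hii : i < i') : μ' i' ≤ ν i :=
  le_trans (hμ (by omega : i + 1 ≤ i')) (strip_step hν hμ h i)

def shiftf (δ a : ℕ) (f : ℕ → ℕ) : ℕ → ℕ := fun i => f i + if i < a then δ else 0

def unshiftf (δ a : ℕ) (f : ℕ → ℕ) : ℕ → ℕ := fun i => f i - if i < a then δ else 0

lemma shift_strip (δ a : ℕ) {ν μ' : ℕ → ℕ} (hν : Antitone ν) (hμ : Antitone μ')
    (h : AtMostOnePerColumn ν μ') :
    AtMostOnePerColumn (shiftf δ a ν) (shiftf δ (a + 1) μ') := by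
  have aux : ∀ j i i', i < i' → shiftf δ a ν i ≤ j → j < shiftf δ (a+1) μ' i →
      shiftf δ a ν i' ≤ j → j < shiftf δ (a+1) μ' i' → False := by
    intro j i i' hii h1 h2 h3 h4
    simp only [shiftf] at h1 h2 h3 h4
    rcases lt_or_ge i' a with hia | hia
    · have hi : i < a := lt_trans hii hia
      rw [if_pos hi] at h1
      rw [if_pos (show i < a + 1 by omega)] at h2
      rw [if_pos hia] at h3
      rw [if_pos (show i' < a + 1 by omega)] at h4
      have := h (j - δ) i i' (by omega) (by omega) (by omega) (by omega)
      omega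
    · have key := strip_chain hν hμ h hii
      split_ifs at h1 h2 h3 h4 <;> omega
  intro j i i' h1 h2 h3 h4
  rcases lt_trichotomy i i' with hlt | heq | hgt
  · exact (aux j i i' hlt h1 h2 h3 h4).elim
  · exact heq
  · exact (aux j i' i hgt h3 h4 h1 h2).elim

lemma unshift_strip (δ a B : ℕ) {ν μ' : ℕ → ℕ} (hν : Antitone ν) (hμ : Antitone μ')
    (h : AtMostOnePerColumn ν μ')
    (hlow : ∀ i < a, B + δ ≤ ν i) (hhigh : ∀ i > a, μ' i ≤ B) :
    AtMostOnePerColumn (unshiftf δ a ν) (unshiftf δ (a + 1) μ') := by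
  have aux : ∀ j i i', i < i' → unshiftf δ a ν i ≤ j → j < unshiftf δ (a+1) μ' i →
      unshiftf δ a ν i' ≤ j → j < unshiftf δ (a+1) μ' i' → False := by
    intro j i i' hii h1 h2 h3 h4
    simp only [unshiftf] at h1 h2 h3 h4
    rcases lt_or_ge i' a with hia | hia
    · have hi : i < a := lt_trans hii hia
      rw [if_pos hi] at h1
      rw [if_pos (show i < a + 1 by omega)] at h2
      rw [if_pos hia] at h3
      rw [if_pos (show i' < a + 1 by omega)] at h4
      have := h (j + δ) i i' (by omega) (by omega) (by omega) (by omega)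
      omega
    · rcases eq_or_lt_of_le hia with heq | hgt
      · -- i' = a
        have key := strip_chain hν hμ h hii
        rw [if_pos (show i < a by omega)] at h1
        rw [if_pos (show i' < a + 1 by omega)] at h4
        omega
      · -- i' > a
        rcases lt_trichotomy i a with hi | hi | hi
        · have k1 := hlow i hi
          have k2 := hhigh i' hgt
          rw [if_pos hi] at h1
          rw [if_neg (show ¬ i' < a + 1 by omega)] at h4
          omega
        · have key := strip_chain hν hμ h hii
          rw [if_neg (show ¬ i < a by omega)] at h1
          rw [if_neg (show ¬ i' < a + 1 by omega)] at h4
          omega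
        · have := h j i i' (by rw [if_neg (show ¬ i < a by omega)] at h1; omega)
            (by rw [if_neg (show ¬ i < a + 1 by omega)] at h2; omega)
            (by rw [if_neg (show ¬ i' < a by omega)] at h3; omega)
            (by rw [if_neg (show ¬ i' < a + 1 by omega)] at h4; omega)
          omega
  intro j i i' h1 h2 h3 h4
  rcases lt_trichotomy i i' with hlt | heq | hgt
  · exact (aux j i i' hlt h1 h2 h3 h4).elim
  · exact heq
  · exact (aux j i' i hgt h3 h4 h1 h2).elim

lemma psize_eq_sum {μ : ℕ → ℕ} {N : ℕ} (h : ∀ n ≥ N, μ n = 0) :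
    psize μ = ∑ i ∈ Finset.range N, μ i := by
  apply finsum_eq_sum_of_support_subset
  intro x hx
  simp only [Function.mem_support] at hx
  simp only [Finset.coe_range, Set.mem_Iio]
  by_contra hc
  exact hx (h x (by omega))

lemma psize_mono {μ lam : ℕ → ℕ} (hμ : ∃ N, ∀ n ≥ N, μ n = 0)
    (hlam : ∃ N, ∀ n ≥ N, lam n = 0) (h : ∀ i, μ i ≤ lam i) : psize μ ≤ psize lam := by
  obtain ⟨N₁, h₁⟩ := hμ
  obtain ⟨N₂, h₂⟩ := hlam
  rw [psize_eq_sum (N := max N₁ N₂) (fun n hn => h₁ n (le_trans (le_max_left _ _) hn)),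
    psize_eq_sum (N := max N₁ N₂) (fun n hn => h₂ n (le_trans (le_max_right _ _) hn))]
  exact Finset.sum_le_sum fun i _ => h i

/-- the staircase descent along a Pieri chain -/
lemma chain_desc {d : ℕ} {c : Fin (d + 1) → ℕ → ℕ}
    (hpart : ∀ i, IsPartition (c i))
    (hstep : ∀ i : Fin d, (∀ j, c i.castSucc j ≤ c i.succ j) ∧
      AtMostOnePerColumn (c i.castSucc) (c i.succ)) :
    ∀ s t (h : t + s ≤ d) i, c ⟨t + s, by omega⟩ (i + s) ≤ c ⟨t, by omega⟩ i := by
  intro s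
  induction s with
  | zero => intro t h i; simp
  | succ s ih =>
    intro t h i
    have hstep' := hstep ⟨t + s, by omega⟩
    have hs' : AtMostOnePerColumn (c ⟨t + s, by omega⟩) (c ⟨t + s + 1, by omega⟩) :=
      (hstep ⟨t + s, by omega⟩).2
    have h1 : c ⟨t + s + 1, by omega⟩ ((i + s) + 1) ≤ c ⟨t + s, by omega⟩ (i + s) :=
      strip_step (hpart ⟨t + s, by omega⟩).1 (hpart ⟨t + s + 1, by omega⟩).1 hs' (i + s)
    calc c ⟨t + (s + 1), by omega⟩ (i + (s + 1)) = c ⟨t + s + 1, by omega⟩ ((i + s) + 1) := by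
          congr 1 <;> omega
      _ ≤ c ⟨t + s, by omega⟩ (i + s) := h1
      _ ≤ c ⟨t, by omega⟩ i := ih t (by omega) i

lemma pad_lt {r : ℕ} (m : Fin r → ℕ) (μ : ℕ → ℕ) {i : ℕ} (h : i < r) :
    pad r m μ i = m ⟨i, h⟩ - psize μ := by simp [pad, h]

lemma pad_ge {r : ℕ} (m : Fin r → ℕ) (μ : ℕ → ℕ) {i : ℕ} (h : r ≤ i) :
    pad r m μ i = μ (i - r) := by simp [pad, Nat.not_lt.2 h]

def ChainPred (d : ℕ) (lam μf : ℕ → ℕ) (c : Fin (d + 1) → ℕ → ℕ) : Prop :=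
  c 0 = lam ∧ c (Fin.last d) = μf ∧ (∀ i, IsPartition (c i)) ∧
  ∀ i : Fin d, (∀ j, c i.castSucc j ≤ c i.succ j) ∧
    AtMostOnePerColumn (c i.castSucc) (c i.succ)

lemma chainCount_eq (d : ℕ) (lam μf : ℕ → ℕ) :
    chainCount d lam μf = Nat.card {c : Fin (d + 1) → ℕ → ℕ // ChainPred d lam μf c} := rfl

lemma chain_desc' {d : ℕ} {c : Fin (d + 1) → ℕ → ℕ}
    (hpart : ∀ i, IsPartition (c i))
    (hstep : ∀ i : Fin d, (∀ j, c i.castSucc j ≤ c i.succ j) ∧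
      AtMostOnePerColumn (c i.castSucc) (c i.succ)) :
    ∀ (k k' : Fin (d + 1)), k.val ≤ k'.val → ∀ i, c k' (i + (k'.val - k.val)) ≤ c k i := by
  intro k k' hkk i
  have h2 := chain_desc hpart hstep (k'.val - k.val) k.val (by omega) i
  have e : (⟨k.val + (k'.val - k.val), by omega⟩ : Fin (d + 1)) = k' := by
    ext; simp; omega
  rw [e] at h2
  exact h2

lemma chain_facts (d : ℕ) (hd : 1 ≤ d) (lam μ : ℕ → ℕ) (n : Fin d → ℕ)
    (hmono : Antitone n) (l : ℕ) {c : Fin (d + 1) → ℕ → ℕ}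
    (hc : ChainPred d lam (pad d (fun i => n i + l) μ) c) :
    (∀ (k : Fin (d + 1)) i, k.val ≤ i → c k i ≤ lam 0) ∧
    (∀ (k : Fin (d + 1)) i, i < k.val → n ⟨d - 1, Nat.sub_lt hd Nat.one_pos⟩ + l - psize μ ≤ c k i) ∧
    (∀ i, μ i ≤ lam i) := by
  obtain ⟨h0, hlast, hpart, hstep⟩ := hc
  have desc := chain_desc' hpart hstep
  refine ⟨?_, ?_, ?_⟩
  · intro k i hki
    have h1 := desc 0 k (by simp) 0
    simp only [Fin.val_zero, Nat.sub_zero, Nat.zero_add, h0] at h1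
    exact le_trans ((hpart k).1 hki) h1
  · intro k i hik
    have h1 := desc k (Fin.last d) (by simp [Fin.le_def, Fin.last]; omega) i
    rw [hlast] at h1
    have hlt : i + ((Fin.last d).val - k.val) < d := by
      simp only [Fin.val_last]
      have := k.isLt; omega
    rw [pad_lt _ _ hlt] at h1
    refine le_trans (Nat.sub_le_sub_right (Nat.add_le_add_right ?_ l) (psize μ)) h1
    exact hmono (by simp [Fin.le_def, Fin.val_last]; have := k.isLt; omega)
  · intro i
    have h1 := desc 0 (Fin.last d) (by simp) i
    rw [hlast, h0] at h1
    rw [pad_ge _ _ (by simp [Fin.val_last]; try omega)] at h1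
    simpa [Fin.val_last] using h1

lemma forward (d : ℕ) (hd : 1 ≤ d) (lam μ : ℕ → ℕ)
    (n : Fin d → ℕ) (hbig : ∀ i, psize μ ≤ n i)
    (l₁ δ : ℕ) {c : Fin (d + 1) → ℕ → ℕ}
    (hc : ChainPred d lam (pad d (fun i => n i + l₁) μ) c) :
    ChainPred d lam (pad d (fun i => n i + (l₁ + δ)) μ)
      (fun k => shiftf δ k.val (c k)) := by
  obtain ⟨h0, hlast, hpart, hstep⟩ := hc
  refine ⟨?_, ?_, ?_, ?_⟩
  · funext i
    simp [shiftf, h0]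
  · funext i
    simp only [shiftf, Fin.val_last]
    rw [hlast]
    rcases lt_or_ge i d with h | h
    · rw [pad_lt _ _ h, pad_lt _ _ h, if_pos h]
      have := hbig ⟨i, h⟩
      omega
    · rw [pad_ge _ _ h, pad_ge _ _ h, if_neg (by omega)]
      omega
  · intro k
    constructor
    · intro i j hij
      have := (hpart k).1 hij
      simp only [shiftf]
      split_ifs <;> omega
    · obtain ⟨N, hN⟩ := (hpart k).2
      refine ⟨N + d + 1, fun m hm => ?_⟩
      simp only [shiftf]
      rw [hN m (by omega), if_neg (by have := k.isLt; omega)]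
  · intro k
    constructor
    · intro j
      have := (hstep k).1 j
      simp only [shiftf, Fin.coe_castSucc, Fin.val_succ]
      split_ifs <;> omega
    · simp only [Fin.coe_castSucc, Fin.val_succ]
      exact shift_strip δ k.val (hpart k.castSucc).1 (hpart k.succ).1 (hstep k).2

lemma backward (d : ℕ) (hd : 1 ≤ d) (lam μ : ℕ → ℕ)
    (hlam : IsPartition lam) (hμ : IsPartition μ)
    (n : Fin d → ℕ) (hmono : Antitone n) (hbig : ∀ i, psize μ + μ 0 ≤ n i)
    (l₁ δ : ℕ) (h₁ : lam 0 + psize lam ≤ n ⟨d - 1, Nat.sub_lt hd Nat.one_pos⟩ + l₁)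
    {c : Fin (d + 1) → ℕ → ℕ}
    (hc : ChainPred d lam (pad d (fun i => n i + (l₁ + δ)) μ) c) :
    ChainPred d lam (pad d (fun i => n i + l₁) μ)
      (fun k => unshiftf δ k.val (c k)) := by
  obtain ⟨UB, LB, hmulam⟩ := chain_facts d hd lam μ n hmono (l₁ + δ) hc
  have hsize : psize μ ≤ psize lam := psize_mono hμ.2 hlam.2 hmulam
  have hbig' : ∀ i, psize μ ≤ n i := fun i => le_trans (Nat.le_add_right _ _) (hbig i)
  have K : lam 0 + δ ≤ n ⟨d - 1, Nat.sub_lt hd Nat.one_pos⟩ + (l₁ + δ) - psize μ := by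
    have := hbig' ⟨d - 1, Nat.sub_lt hd Nat.one_pos⟩
    omega
  have LB' : ∀ (k : Fin (d + 1)) i, i < k.val → lam 0 + δ ≤ c k i :=
    fun k i h => le_trans K (LB k i h)
  obtain ⟨h0, hlast, hpart, hstep⟩ := hc
  refine ⟨?_, ?_, ?_, ?_⟩
  · funext i
    simp [unshiftf, h0]
  · funext i
    simp only [unshiftf, Fin.val_last]
    rw [hlast]
    rcases lt_or_ge i d with h | h
    · rw [pad_lt _ _ h, pad_lt _ _ h, if_pos h]
      have := hbig' ⟨i, h⟩
      omega
    · rw [pad_ge _ _ h, pad_ge _ _ h, if_neg (by omega)]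
      omega
  · intro k
    constructor
    · intro i j hij
      have h1 := (hpart k).1 hij
      simp only [unshiftf]
      split_ifs with hjk hik hik
      · omega
      · omega
      · have hL := LB' k i hik
        have hU := UB k j (by omega)
        omega
      · omega
    · obtain ⟨N, hN⟩ := (hpart k).2
      refine ⟨N, fun m hm => ?_⟩
      simp only [unshiftf]
      rw [hN m hm]
      omega
  · intro k
    constructor
    · intro j
      have h1 := (hstep k).1 j
      simp only [unshiftf, Fin.coe_castSucc, Fin.val_succ]
      split_ifs with hjk hjk1 hjk1
      · omega
      · omega
      · have hL := LB' k.succ j (by simp only [Fin.val_succ]; omega)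
        have hU := UB k.castSucc j (by simp only [Fin.coe_castSucc]; omega)
        omega
      · omega
    · simp only [Fin.coe_castSucc, Fin.val_succ]
      refine unshift_strip δ k.val (lam 0) (hpart k.castSucc).1 (hpart k.succ).1 (hstep k).2
        (fun i hi => LB' k.castSucc i (by simp [Fin.coe_castSucc]; omega))
        (fun i hi => UB k.succ i (by simp [Fin.val_succ]; omega))

lemma key (d : ℕ) (hd : 1 ≤ d) (lam μ : ℕ → ℕ)
    (hlam : IsPartition lam) (hμ : IsPartition μ)
    (n : Fin d → ℕ) (hmono : Antitone n)
    (hbig : ∀ i, psize μ + μ 0 ≤ n i)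
    (l₁ δ : ℕ)
    (h₁ : lam 0 + psize lam ≤ n ⟨d - 1, Nat.sub_lt hd Nat.one_pos⟩ + l₁) :
    chainCount d lam (pad d (fun i => n i + l₁) μ) =
      chainCount d lam (pad d (fun i => n i + (l₁ + δ)) μ) := by
  rw [chainCount_eq, chainCount_eq]
  apply Nat.card_congr
  have hbig' : ∀ i, psize μ ≤ n i := fun i => le_trans (Nat.le_add_right _ _) (hbig i)
  refine ⟨fun x => ⟨_, forward d hd lam μ n hbig' l₁ δ x.2⟩,
          fun x => ⟨_, backward d hd lam μ hlam hμ n hmono hbig l₁ δ h₁ x.2⟩, ?_, ?_⟩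
  · intro x
    apply Subtype.ext
    funext k i
    simp only [shiftf, unshiftf]
    split_ifs <;> omega
  · intro x
    obtain ⟨UB, LB, hml⟩ := chain_facts d hd lam μ n hmono (l₁ + δ) x.2
    apply Subtype.ext
    funext k i
    simp only [shiftf, unshiftf]
    split_ifs with hik
    · have h2 := LB k i hik
      have h3 := hbig' ⟨d - 1, Nat.sub_lt hd Nat.one_pos⟩
      omega
    · omega

/-- For fixed partitions `λ, μ` and `n_1 ≥ … ≥ n_d ≥ |μ| + μ_1`, the number of Pieri chains
from `λ` to `μ[n_1+l,…,n_d+l]` takes the same value for all `l` with `n_d + l ≥ λ_1 + |λ|`. -/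
theorem chainCount_stabilizes (d : ℕ) (hd : 1 ≤ d) (lam μ : ℕ → ℕ)
    (hlam : IsPartition lam) (hμ : IsPartition μ)
    (n : Fin d → ℕ) (hmono : Antitone n)
    (hbig : ∀ i, psize μ + μ 0 ≤ n i)
    (l₁ l₂ : ℕ)
    (h₁ : lam 0 + psize lam ≤ n ⟨d - 1, by omega⟩ + l₁)
    (h₂ : lam 0 + psize lam ≤ n ⟨d - 1, by omega⟩ + l₂) :
    chainCount d lam (pad d (fun i => n i + l₁) μ) =
      chainCount d lam (pad d (fun i => n i + l₂) μ) := by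
  rcases le_total l₁ l₂ with h | h
  · have key' := key d hd lam μ hlam hμ n hmono hbig l₁ (l₂ - l₁) h₁
    rw [show l₁ + (l₂ - l₁) = l₂ from by omega] at key'
    exact key'
  · have key' := key d hd lam μ hlam hμ n hmono hbig l₂ (l₁ - l₂) h₂
    rw [show l₂ + (l₁ - l₂) = l₁ from by omega] at key'
    exact key'.symm
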